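/- Let m ≥ 2 and N ≥ m. Let p_j = a_{j,0} + a_{j,1}z + ⋯ + a_{j,m−1}z^{m−1} ∈ ℂ[z] for 0 ≤ j ≤ r−1, encoding the polar forms ν_j = p_j·dz/z^m, and assume the leading coefficients a_{0,0},…,a_{r−1,0} are pairwise distinct. Let (V,∇) = V(ν_{r−1},1) ⊕ V(ν_{r−2},1) ⊕ ⋯ ⊕ V(ν_0,1), a free ℂ[[z]]-module of rank r with connection of pole order m, let V_N := V/z^NV with the induced operator D_N (satisfying D_N(a·v) = (z^m·da/dz)·v + a·D_N(v) for a ∈ ℂ[z]/(z^N)). Then there is exactly one filtration V_N = l_0 ⊃ l_1 ⊃ ⋯ ⊃ l_{r−1} ⊃ l_r = 0 by ℂ[z]/(z^N)-submodules such that each l_j/l_{j+1} is free of rank 1, D_N(l_j) ⊆ l_j for all j, and for each j the induced map on l_j/l_{j+1} minus multiplication by p_j takes values in z^m·(l_j/l_{j+1}); namely, l_j is the image of V(ν_{r−1},1) ⊕ ⋯ ⊕ V(ν_j,1) in V_N. -/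

import Mathlib

noncomputable section

/-- Formal derivative of a power series over `ℂ`. -/
def psDeriv (f : PowerSeries ℂ) : PowerSeries ℂ :=
  PowerSeries.mk fun n => ((n : ℂ) + 1) * PowerSeries.coeff (n + 1) f

/-- The connection of pole order `m` on `V = V(ν_{r-1},1) ⊕ ⋯ ⊕ V(ν_0,1)`
(coordinate `i` carrying the polar form `ν_i = p_i·dz/z^m`), written in the
trivialization by the generator `dz/z^m`. -/
def diagD (r m : ℕ) (p : ℕ → PowerSeries ℂ)
    (g : Fin r → PowerSeries ℂ) : Fin r → PowerSeries ℂ := fun i =>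
  (PowerSeries.X : PowerSeries ℂ) ^ m * psDeriv (g i) + p (i : ℕ) * g i

/-- The preimage in `V` of the image of `V(ν_{r-1},1) ⊕ ⋯ ⊕ V(ν_j,1)` in
`V_N = V/z^N V`: the coordinates `i < j` are divisible by `z^N`. For `j = r`
this is `z^N·V`, i.e. the zero submodule of `V_N`. -/
def canonFilt (r N j : ℕ) : Submodule (PowerSeries ℂ) (Fin r → PowerSeries ℂ) :=
  Submodule.pi Set.univ fun i : Fin r =>
    if (i : ℕ) < j then
      (Ideal.span {(PowerSeries.X : PowerSeries ℂ) ^ N} : Ideal (PowerSeries ℂ))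
    else ⊤

lemma psDeriv_eq (f : PowerSeries ℂ) : psDeriv f = PowerSeries.derivative ℂ f := by
  ext n; simp [psDeriv, PowerSeries.coeff_derivative, mul_comm]

lemma psDeriv_mul (f g : PowerSeries ℂ) :
    psDeriv (f * g) = psDeriv f * g + f * psDeriv g := by
  simp [psDeriv_eq, Derivation.leibniz, smul_eq_mul, mul_comm, add_comm]

lemma psDeriv_add (f g : PowerSeries ℂ) : psDeriv (f + g) = psDeriv f + psDeriv g := by
  simp [psDeriv_eq]

lemma psDeriv_one : psDeriv 1 = 0 := by simp [psDeriv_eq]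
lemma psDeriv_zero : psDeriv 0 = 0 := by simp [psDeriv_eq]

lemma psDeriv_X_pow (k : ℕ) :
    psDeriv ((PowerSeries.X : PowerSeries ℂ) ^ k)
      = (k : PowerSeries ℂ) * PowerSeries.X ^ (k - 1) := by
  simp [psDeriv_eq, Derivation.leibniz_pow]

lemma mem_canonFilt {r N j : ℕ} {v : Fin r → PowerSeries ℂ} :
    v ∈ canonFilt r N j ↔
      ∀ i : Fin r, (i : ℕ) < j → (PowerSeries.X : PowerSeries ℂ) ^ N ∣ v i := by
  constructor
  · intro h i hi
    have := h i (Set.mem_univ i)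
    simp only [hi, if_true] at this
    exact Ideal.mem_span_singleton.mp this
  · intro h i _
    show v i ∈ (if (i : ℕ) < j then _ else ⊤ : Ideal (PowerSeries ℂ))
    by_cases hi : (i : ℕ) < j
    · simp only [hi, if_true]; exact Ideal.mem_span_singleton.mpr (h i hi)
    · simp [hi]

lemma diagD_apply (r m : ℕ) (p : ℕ → PowerSeries ℂ) (g : Fin r → PowerSeries ℂ) (i : Fin r) :
    diagD r m p g i
      = (PowerSeries.X : PowerSeries ℂ) ^ m * psDeriv (g i) + p (i : ℕ) * g i := rfl

lemma diagD_single (r m : ℕ) (p : ℕ → PowerSeries ℂ) (t : Fin r) :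
    diagD r m p (Pi.single t 1)
      = p (t : ℕ) • (Pi.single t 1 : Fin r → PowerSeries ℂ) := by
  funext i
  rcases eq_or_ne i t with h | h
  · subst h; simp [diagD, psDeriv_one]
  · simp [diagD, Pi.single_apply, h, psDeriv_zero]

lemma X_pow_dvd_X_pow_mul_psDeriv {N m : ℕ} (hm : 1 ≤ m) (hN : 1 ≤ N)
    {f : PowerSeries ℂ} (hf : (PowerSeries.X : PowerSeries ℂ) ^ N ∣ f) :
    (PowerSeries.X : PowerSeries ℂ) ^ N ∣ PowerSeries.X ^ m * psDeriv f := by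
  obtain ⟨g, rfl⟩ := hf
  obtain ⟨m', rfl⟩ : ∃ m', m = m' + 1 := ⟨m - 1, by omega⟩
  obtain ⟨N', rfl⟩ : ∃ N', N = N' + 1 := ⟨N - 1, by omega⟩
  refine ⟨(N' + 1 : PowerSeries ℂ) * PowerSeries.X ^ m' * g
    + PowerSeries.X ^ (m' + 1) * psDeriv g, ?_⟩
  rw [psDeriv_mul, psDeriv_X_pow]
  push_cast
  ring

lemma canonFilt_zero (r N : ℕ) : canonFilt r N 0 = ⊤ := by
  rw [eq_top_iff]
  intro v _
  rw [mem_canonFilt]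
  intro i hi
  omega

lemma canonFilt_antitone (r N : ℕ) {j j' : ℕ} (h : j ≤ j') :
    canonFilt r N j' ≤ canonFilt r N j := by
  intro v hv
  rw [mem_canonFilt] at hv ⊢
  intro i hi
  exact hv i (by omega)


/-- The conditions on a filtration `V_N = l̄ 0 ⊃ l̄ 1 ⊃ ⋯ ⊃ l̄ r = 0` of
`V_N = V/z^N V` (given by its preimages `l j ⊇ z^N·V` in `V`): each graded piece
`l̄ j / l̄ (j+1)` is free of rank one over `ℂ[z]/(z^N)`, each `l̄ j` is stable
under the induced operator `D_N`, and on the `j`-th graded piece the induced map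
minus multiplication by `p j` takes values in `z^m·(l̄ j / l̄ (j+1))`
(the `ν`-parabolic condition of depth `N`). -/
def IsDeepParabolicFiltration (r m N : ℕ) (p : ℕ → PowerSeries ℂ)
    (l : ℕ → Submodule (PowerSeries ℂ) (Fin r → PowerSeries ℂ)) : Prop :=
  l 0 = ⊤ ∧ l r = canonFilt r N r ∧
  (∀ j < r, l (j + 1) ≤ l j) ∧
  (∀ j < r, ∀ v ∈ l j, diagD r m p v ∈ l j) ∧
  (∀ j < r, ∃ e ∈ l j,
    l j = Submodule.span (PowerSeries ℂ) {e} ⊔ l (j + 1) ∧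
    ∀ a : PowerSeries ℂ, a • e ∈ l (j + 1) → (PowerSeries.X : PowerSeries ℂ) ^ N ∣ a) ∧
  (∀ j < r, ∀ v ∈ l j, ∃ w ∈ l j,
    diagD r m p v - p j • v - ((PowerSeries.X : PowerSeries ℂ) ^ m) • w ∈ l (j + 1))

lemma canonFilt_isDeep (r m N : ℕ) (hm : 2 ≤ m) (hN : m ≤ N) (p : ℕ → PowerSeries ℂ) :
    IsDeepParabolicFiltration r m N p (canonFilt r N) := by
  refine ⟨canonFilt_zero r N, rfl, fun j _ => canonFilt_antitone r N (by omega),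
    ?_, ?_, ?_⟩
  · -- D-stability
    intro j hj v hv
    rw [mem_canonFilt] at hv ⊢
    intro i hi
    exact dvd_add (X_pow_dvd_X_pow_mul_psDeriv (by omega) (by omega) (hv i hi))
      ((hv i hi).mul_left _)
  · -- generator
    intro j hj
    set jf : Fin r := ⟨j, hj⟩ with hjf
    refine ⟨Pi.single jf 1, ?_, ?_, ?_⟩
    · rw [mem_canonFilt]
      intro i hi
      rw [Pi.single_apply, if_neg (by intro h; subst h; simp [hjf] at hi)]
      exact dvd_zero _
    · apply le_antisymm
      · intro v hv
        have hrest : v - (v jf) • (Pi.single jf 1 : Fin r → PowerSeries ℂ) ∈ canonFilt r N (j + 1) := by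
          rw [mem_canonFilt]
          intro i hi
          simp only [Pi.sub_apply, Pi.smul_apply, smul_eq_mul, Pi.single_apply]
          rcases eq_or_ne i jf with h | h
          · subst h; simp
          · rw [if_neg h, mul_zero, sub_zero]
            rw [mem_canonFilt] at hv
            refine hv i ?_
            have : (i : ℕ) ≠ j := by
              intro hc; exact h (Fin.ext (by simp [hjf, hc]))
            omega
        have : v = (v jf) • (Pi.single jf 1 : Fin r → PowerSeries ℂ) + (v - (v jf) • (Pi.single jf 1 : Fin r → PowerSeries ℂ)) := by abel
        rw [this]
        exact Submodule.add_mem _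
          (Submodule.mem_sup_left (Submodule.mem_span_singleton.mpr ⟨v jf, rfl⟩))
          (Submodule.mem_sup_right hrest)
      · refine sup_le ?_ (canonFilt_antitone r N (by omega))
        rw [Submodule.span_le, Set.singleton_subset_iff]
        rw [SetLike.mem_coe, mem_canonFilt]
        intro i hi
        rw [Pi.single_apply, if_neg (by intro h; subst h; simp [hjf] at hi)]
        exact dvd_zero _
    · intro a ha
      rw [mem_canonFilt] at ha
      have := ha jf (by simp [hjf])
      simpa [Pi.single_apply] using this
  · -- parabolic
    intro j hj v hv
    set jf : Fin r := ⟨j, hj⟩ with hjf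
    refine ⟨Pi.single jf (psDeriv (v jf)), ?_, ?_⟩
    · rw [mem_canonFilt]
      intro i hi
      rw [Pi.single_apply, if_neg (by intro h; subst h; simp [hjf] at hi)]
      exact dvd_zero _
    · rw [mem_canonFilt]
      intro i hi
      simp only [Pi.sub_apply, Pi.smul_apply, smul_eq_mul, diagD_apply, Pi.single_apply]
      rcases eq_or_ne i jf with h | h
      · subst h
        have hjval : ((jf : Fin r) : ℕ) = j := rfl
        simp only [if_pos rfl, if_true, hjval]
        have : (PowerSeries.X : PowerSeries ℂ) ^ m * psDeriv (v jf) + p j * v jf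
            - p j * v jf - PowerSeries.X ^ m * psDeriv (v jf) = 0 := by ring
        rw [this]
        exact dvd_zero _
      · rw [if_neg h, mul_zero, sub_zero]
        rw [mem_canonFilt] at hv
        have hij : (i : ℕ) < j := by
          have : (i : ℕ) ≠ j := by
            intro hc; exact h (Fin.ext (by simp [hjf, hc]))
          omega
        have hvi := hv i hij
        have h1 := X_pow_dvd_X_pow_mul_psDeriv (m := m) (by omega) (by omega) hvi
        have h2 : (PowerSeries.X : PowerSeries ℂ) ^ N ∣ p (i : ℕ) * v i := hvi.mul_left _
        have h3 : (PowerSeries.X : PowerSeries ℂ) ^ N ∣ p j * v i := hvi.mul_left _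
        exact dvd_sub (dvd_add h1 h2) h3

lemma filtration_step (r m N : ℕ) (hm : 2 ≤ m) (hN : m ≤ N)
    (p : ℕ → PowerSeries ℂ)
    (hdist : ∀ j₁ < r, ∀ j₂ < r, j₁ ≠ j₂ →
      PowerSeries.constantCoeff (p j₁) ≠ PowerSeries.constantCoeff (p j₂))
    (l : ℕ → Submodule (PowerSeries ℂ) (Fin r → PowerSeries ℂ))
    (hF : IsDeepParabolicFiltration r m N p l)
    (j : ℕ) (hj : j < r) (hlj : l j = canonFilt r N j) :
    l (j + 1) = canonFilt r N (j + 1) := by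
  obtain ⟨h0, hrN, hmono, hstab, hgen, hpar⟩ := hF
  have hchain : ∀ d a, a + d ≤ r → l (a + d) ≤ l a := by
    intro d
    induction d with
    | zero => intro a _; exact le_of_eq rfl
    | succ d ih =>
      intro a h
      exact le_trans (hmono (a + d) (by omega)) (ih a (by omega))
  have hXNV : canonFilt r N r ≤ l (j + 1) := by
    have h1 := hchain (r - (j + 1)) (j + 1) (by omega)
    have hidx : (j + 1) + (r - (j + 1)) = r := by omega
    rw [hidx] at h1
    rw [← hrN]
    exact h1
  -- single basis vectors of high index lie in l (j+1)
  have hsingle : ∀ t : Fin r, j < (t : ℕ) →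
      (Pi.single t 1 : Fin r → PowerSeries ℂ) ∈ l (j + 1) := by
    intro t ht
    have hj1r : j + 1 < r := lt_of_le_of_lt (by omega) t.isLt
    have hne : PowerSeries.constantCoeff (p (t : ℕ) - p j) ≠ 0 := by
      rw [map_sub, sub_ne_zero]
      exact hdist (t : ℕ) t.isLt j hj (by omega)
    have hunit : IsUnit (p (t : ℕ) - p j) :=
      PowerSeries.isUnit_iff_constantCoeff.mpr (isUnit_iff_ne_zero.mpr hne)
    obtain ⟨q, hq⟩ := hunit.exists_left_inv
    have hεmem : (Pi.single t 1 : Fin r → PowerSeries ℂ) ∈ l j := by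
      rw [hlj, mem_canonFilt]
      intro i hi
      rw [Pi.single_apply, if_neg (by intro hc; subst hc; omega)]
      exact dvd_zero _
    have main : ∀ k, m ≤ k → ∃ h ∈ canonFilt r N j, ∃ u ∈ l (j + 1),
        (Pi.single t 1 : Fin r → PowerSeries ℂ)
          = (PowerSeries.X : PowerSeries ℂ) ^ k • h + u := by
      intro k hk
      induction k, hk using Nat.le_induction with
      | base =>
        obtain ⟨w, hw, hwmem⟩ := hpar j hj _ hεmem
        rw [hlj] at hw
        refine ⟨q • w, Submodule.smul_mem _ _ hw,
          q • (diagD r m p (Pi.single t 1) - p j • (Pi.single t 1 : Fin r → PowerSeries ℂ)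
            - ((PowerSeries.X : PowerSeries ℂ) ^ m) • w),
          Submodule.smul_mem _ _ hwmem, ?_⟩
        rw [diagD_single]
        funext i
        simp only [Pi.add_apply, Pi.smul_apply, Pi.sub_apply, smul_eq_mul]
        linear_combination (-((Pi.single t 1 : Fin r → PowerSeries ℂ) i)) * hq
      | succ k hk ih =>
        obtain ⟨h, hhmem, u, humem, hdec⟩ := ih
        obtain ⟨w, hwmem, hwpar⟩ := hpar j hj h (by rw [hlj]; exact hhmem)
        rw [hlj] at hwmem
        have hDu : diagD r m p u ∈ l (j + 1) := hstab (j + 1) hj1r u humem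
        obtain ⟨m'', rfl⟩ : ∃ m'', m = m'' + 2 := ⟨m - 2, by omega⟩
        obtain ⟨k', rfl⟩ : ∃ k', k = k' + 1 := ⟨k - 1, by omega⟩
        refine ⟨q • ((((k' : PowerSeries ℂ) + 1) * PowerSeries.X ^ m'') • h
            + ((PowerSeries.X : PowerSeries ℂ) ^ (m'' + 1)) • w),
          Submodule.smul_mem _ _ (Submodule.add_mem _
            (Submodule.smul_mem _ _ hhmem) (Submodule.smul_mem _ _ hwmem)),
          q • (((PowerSeries.X : PowerSeries ℂ) ^ (k' + 1)) •
              (diagD r (m'' + 2) p h - p j • h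
                - ((PowerSeries.X : PowerSeries ℂ) ^ (m'' + 2)) • w)
            + diagD r (m'' + 2) p u - p (t : ℕ) • u) + u,
          Submodule.add_mem _ (Submodule.smul_mem _ _ (Submodule.sub_mem _
            (Submodule.add_mem _ (Submodule.smul_mem _ _ hwpar) hDu)
            (Submodule.smul_mem _ _ humem))) humem, ?_⟩
        have hD : diagD r (m'' + 2) p
              ((PowerSeries.X : PowerSeries ℂ) ^ (k' + 1) • h + u)
            = p (t : ℕ) • ((PowerSeries.X : PowerSeries ℂ) ^ (k' + 1) • h + u) := by
          rw [← hdec, diagD_single]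
        rw [hdec]
        funext i
        have hDi := congrFun hD i
        simp only [diagD_apply, Pi.add_apply, Pi.smul_apply, Pi.sub_apply, smul_eq_mul,
          psDeriv_add, psDeriv_mul, psDeriv_X_pow, Nat.add_sub_cancel, Nat.cast_add,
          Nat.cast_one] at hDi ⊢
        linear_combination (-q) * hDi
          - ((PowerSeries.X : PowerSeries ℂ) ^ (k' + 1) * h i) * hq
    obtain ⟨h, hh, u, hu, hdec⟩ := main N hN
    rw [hdec]
    refine Submodule.add_mem _ (hXNV ?_) hu
    rw [mem_canonFilt]
    intro b _
    simp only [Pi.smul_apply, smul_eq_mul]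
    exact dvd_mul_right _ _
  -- Part A : canonical ≤ l (j+1)
  have hA : canonFilt r N (j + 1) ≤ l (j + 1) := by
    intro v hv
    have hdecomp : v = ∑ i : Fin r, v i • (Pi.single i 1 : Fin r → PowerSeries ℂ) := by
      funext x
      rw [Finset.sum_apply]
      simp [Pi.single_apply]
    rw [hdecomp]
    refine Submodule.sum_mem _ ?_
    intro i _
    by_cases hij : j < (i : ℕ)
    · exact Submodule.smul_mem _ _ (hsingle i hij)
    · have hdvd : (PowerSeries.X : PowerSeries ℂ) ^ N ∣ v i :=
        mem_canonFilt.mp hv i (by omega)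
      refine hXNV ?_
      rw [mem_canonFilt]
      intro b _
      simp only [Pi.smul_apply, smul_eq_mul, Pi.single_apply]
      rcases eq_or_ne b i with hbi | hbi
      · rw [if_pos hbi, mul_one]; exact hdvd
      · rw [if_neg hbi, mul_zero]; exact dvd_zero _
  -- Part B : l (j+1) ≤ canonical
  obtain ⟨e, he, hspan, hann⟩ := hgen j hj
  have hej : e ∈ canonFilt r N j := by rw [← hlj]; exact he
  have hB : l (j + 1) ≤ canonFilt r N (j + 1) := by
    intro u hu
    have huj : u ∈ canonFilt r N j := by
      rw [← hlj]; exact hmono j hj hu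
    rw [mem_canonFilt]
    intro i hi
    by_cases hij : (i : ℕ) < j
    · exact mem_canonFilt.mp huj i hij
    · have hieq : (i : ℕ) = j := by omega
      have hcross : (u i) • e - (e i) • u ∈ canonFilt r N (j + 1) := by
        rw [mem_canonFilt]
        intro b hb
        simp only [Pi.sub_apply, Pi.smul_apply, smul_eq_mul]
        by_cases hbj : (b : ℕ) < j
        · exact dvd_sub ((mem_canonFilt.mp hej b hbj).mul_left _)
            ((mem_canonFilt.mp huj b hbj).mul_left _)
        · have hbi : b = i := Fin.ext (by omega)
          rw [hbi]
          have hz : u i * e i - e i * u i = 0 := by ring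
          rw [hz]
          exact dvd_zero _
      have hmem : (u i) • e ∈ l (j + 1) := by
        have h2 : (e i) • u ∈ l (j + 1) := Submodule.smul_mem _ _ hu
        have h3 := Submodule.add_mem _ (hA hcross) h2
        simpa using h3
      exact hann (u i) hmem
  exact le_antisymm hB hA


/-- **Uniqueness of the depth-`N` parabolic structure for generic exponents.**
Let `m ≥ 2`, `N ≥ m`, and let the polar forms `ν_j = p_j·dz/z^m` (with `p j` of
degree `< m`) have pairwise distinct leading coefficients `p_j(0)`. On
`V = V(ν_{r-1},1) ⊕ ⋯ ⊕ V(ν_0,1)` reduced modulo `z^N`, there is exactly one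
filtration with `D_N`-stable steps, free rank-one graded pieces and the
`ν`-parabolic condition of depth `N`; namely the canonical one, whose `j`-th step
is the image of `V(ν_{r-1},1) ⊕ ⋯ ⊕ V(ν_j,1)`. -/
theorem unique_deep_parabolic_filtration (r m N : ℕ) (hr : 1 ≤ r) (hm : 2 ≤ m)
    (hN : m ≤ N)
    (p : ℕ → PowerSeries ℂ)
    (hpbd : ∀ j < r, ∀ t, m ≤ t → PowerSeries.coeff t (p j) = 0)
    (hdist : ∀ j₁ < r, ∀ j₂ < r, j₁ ≠ j₂ →
      PowerSeries.constantCoeff (p j₁) ≠ PowerSeries.constantCoeff (p j₂)) :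
    IsDeepParabolicFiltration r m N p (canonFilt r N) ∧
    ∀ l, IsDeepParabolicFiltration r m N p l → ∀ j ≤ r, l j = canonFilt r N j := by
  refine ⟨canonFilt_isDeep r m N hm hN p, ?_⟩
  intro l hl j hjr
  induction j with
  | zero => rw [hl.1, canonFilt_zero]
  | succ j ih =>
    exact filtration_step r m N hm hN p hdist l hl j (by omega) (ih (by omega))
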